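/- arXiv:2209.13485 — 3 statements merged into one kernel-verified Lean document; each statement's English description precedes it below -/
import Mathlib

section
/- Deterministic trimming-vs-truncation claim: let b>0 and t ≤ k−⌊ηn⌋. If #{i∈[n] : Z_i > b} ≤ t, then |T_k − (1/n)Σ_{i=1}^n (Z_i∧b)| ≤ 2bk/n. Moreover, for a nonnegative random variable Z_1 with E[Z_1^q]<∞, |E[Z_1] − E[Z_1∧b]| ≤ E[Z_1^q]/b^{q−1}. -/
open MeasureTheory ProbabilityTheory Real
open scoped RealInnerProductSpace ENNReal NNReal

namespace CovPaper

variable {d n : ℕ}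

instance {d : ℕ} : MeasurableSpace (Matrix (Fin d) (Fin d) ℝ) :=
  inferInstanceAs (MeasurableSpace (Fin d → Fin d → ℝ))

/-- Operator norm of a real `d × d` matrix, viewed as an operator on Euclidean space. -/
noncomputable def opNorm (A : Matrix (Fin d) (Fin d) ℝ) : ℝ :=
  ‖Matrix.toEuclideanCLM (𝕜 := ℝ) A‖

/-- Quadratic form `⟨v, A v⟩`. -/
noncomputable def quadForm (A : Matrix (Fin d) (Fin d) ℝ)
    (v : EuclideanSpace ℝ (Fin d)) : ℝ :=
  ⟪v, Matrix.toEuclideanCLM (𝕜 := ℝ) A v⟫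

/-- Effective rank `tr(A)/‖A‖`. -/
noncomputable def effRank (A : Matrix (Fin d) (Fin d) ℝ) : ℝ :=
  A.trace / opNorm A

open Classical in
/-- The number of indices `i` satisfying `P i`. -/
noncomputable def nCount (P : Fin n → Prop) : ℕ :=
  (Finset.univ.filter P).card

/-- Trimmed mean with trimming parameter `k`: the infimum, over all subsets `S` of
`[n]` of cardinality `n - k`, of the average of `W` over `S`. -/
noncomputable def trimmedMean (k : ℕ) (W : Fin n → ℝ) : ℝ :=
  ⨅ S : {S : Finset (Fin n) // S.card = n - k}, (∑ i ∈ S.1, W i) / ((n - k : ℕ) : ℝ)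

/-- Gaussian measure `Γ_{v,γ}` on Euclidean space, with mean `v` and covariance `γ² I`. -/
noncomputable def gaussianE (v : EuclideanSpace ℝ (Fin d)) (γ : ℝ) :
    Measure (EuclideanSpace ℝ (Fin d)) :=
  (Measure.pi fun i : Fin d => gaussianReal (v i) (γ ^ 2).toNNReal).map
    (MeasurableEquiv.toLp 2 (Fin d → ℝ))

/-- The numerical constant `c = ∑_{j≥1} e^{-j/2}·6(j+1)²/j^{3/2} + 4`. -/
noncomputable def cSeries : ℝ :=
  (∑' j : ℕ, Real.exp (-((j : ℝ) + 1) / 2) *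
    (6 * ((j : ℝ) + 2) ^ 2 / ((j : ℝ) + 1) ^ ((3 : ℝ) / 2))) + 4

variable {Ω : Type} [MeasureSpace Ω]

/-- The `L^p`–`L^2` moment constant `κ_p`. -/
noncomputable def kappa (X : Ω → EuclideanSpace ℝ (Fin d))
    (S : Matrix (Fin d) (Fin d) ℝ) (p : ℝ) : ℝ :=
  sSup {r : ℝ | ∃ v : EuclideanSpace ℝ (Fin d), quadForm S v = 1 ∧
    r = (∫ ω, |⟪X ω, v⟫| ^ p) ^ (1 / p)}

/-- `S` is the covariance matrix of the (centered) random vector `X`. -/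
def IsCovMatrix (X : Ω → EuclideanSpace ℝ (Fin d))
    (S : Matrix (Fin d) (Fin d) ℝ) : Prop :=
  ∀ i j, S i j = ∫ ω, X ω i * X ω j

/-- `X` is an i.i.d. sample of copies of `X₀`. -/
def IsIIDSample (X : Fin n → Ω → EuclideanSpace ℝ (Fin d))
    (X₀ : Ω → EuclideanSpace ℝ (Fin d)) : Prop :=
  iIndepFun X ℙ ∧ ∀ i, IdentDistrib (X i) X₀ ℙ ℙ

/-- The trimmed quadratic-form estimator `ê_k(v)` computed from data `Y`. -/
noncomputable def eHat (Y : Fin n → EuclideanSpace ℝ (Fin d)) (k : ℕ)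
    (v : EuclideanSpace ℝ (Fin d)) : ℝ :=
  trimmedMean k fun i => ⟪Y i, v⟫ ^ 2

theorem trim_aux {n k : ℕ} {b : ℝ} (hb : 0 < b) (hkn : k < n)
    (Z W : Fin n → ℝ) (hZ : ∀ i, 0 ≤ Z i) (hW : ∀ i, 0 ≤ W i)
    (hbad : (Finset.univ.filter (fun i => ¬(Z i = W i ∧ Z i ≤ b))).card ≤ k) :
    |trimmedMean k W - (∑ i, min (Z i) b) / n| ≤ 2 * b * k / n := by
  classical
  set A : Finset (Fin n) := Finset.univ.filter (fun i => Z i = W i ∧ Z i ≤ b) with hA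
  have hAc : (Finset.univ \ A).card ≤ k := by
    rw [hA, ← Finset.filter_not]; exact hbad
  have hAsub : A ⊆ Finset.univ := Finset.subset_univ _
  have hcards : (Finset.univ \ A).card = n - A.card := by
    rw [Finset.card_sdiff_of_subset hAsub, Finset.card_univ, Fintype.card_fin]
  have hAcard : n - k ≤ A.card := by
    have := Finset.card_le_univ A
    simp [Finset.card_univ] at this
    omega
  obtain ⟨S, hSA, hScard⟩ := Finset.exists_subset_card_eq hAcard
  set N : ℝ := (n : ℝ) with hN
  set K : ℝ := (k : ℝ) with hK
  have hNK : ((n - k : ℕ) : ℝ) = N - K := by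
    rw [Nat.cast_sub hkn.le]
  have hN0 : (0:ℝ) < N := by rw [hN]; exact_mod_cast (Nat.zero_le k).trans_lt hkn
  have hK0 : (0:ℝ) ≤ K := Nat.cast_nonneg k
  have hNK0 : (0:ℝ) < N - K := by
    have : (k:ℝ) < n := by exact_mod_cast hkn
    linarith
  set M : ℝ := ∑ i, min (Z i) b with hM
  have hmin0 : ∀ i, 0 ≤ min (Z i) b := fun i => le_min (hZ i) hb.le
  have hM0 : 0 ≤ M := Finset.sum_nonneg fun i _ => hmin0 i
  have hWmin : ∀ i ∈ S, W i = min (Z i) b := by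
    intro i hi
    have := hSA hi
    rw [hA, Finset.mem_filter] at this
    obtain ⟨-, h1, h2⟩ := this
    rw [min_eq_left h2, h1]
  -- upper bound
  have hbdd : BddBelow (Set.range fun S : {S : Finset (Fin n) // S.card = n - k} =>
      (∑ i ∈ S.1, W i) / ((n - k : ℕ) : ℝ)) := (Set.finite_range _).bddBelow
  have hup0 : trimmedMean k W ≤ (∑ i ∈ S, W i) / ((n - k : ℕ) : ℝ) :=
    ciInf_le hbdd ⟨S, hScard⟩
  set s : ℝ := ∑ i ∈ S, min (Z i) b with hs
  have hSsum : ∑ i ∈ S, W i = s := Finset.sum_congr rfl hWmin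
  have hsM : s ≤ M :=
    Finset.sum_le_sum_of_subset_of_nonneg (Finset.subset_univ S)
      (fun i _ _ => hmin0 i)
  have hsb : s ≤ (N - K) * b := by
    have := Finset.sum_le_card_nsmul S (fun i => min (Z i) b) b
      (fun i _ => min_le_right _ _)
    rw [hScard, nsmul_eq_mul, hNK] at this
    exact this
  have hup : trimmedMean k W ≤ M / N + 2 * b * K / N := by
    refine hup0.trans ?_
    rw [hSsum, hNK, ← add_div, div_le_div_iff₀ hNK0 hN0]
    have hs0 : 0 ≤ s := Finset.sum_nonneg fun i _ => hmin0 i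
    nlinarith [mul_nonneg (mul_nonneg hb.le hK0) hNK0.le]
  -- lower bound
  have hlow : M / N - 2 * b * K / N ≤ trimmedMean k W := by
    have hne : Nonempty {S : Finset (Fin n) // S.card = n - k} := ⟨⟨S, hScard⟩⟩
    refine le_ciInf ?_
    rintro ⟨S', hS'⟩
    set s' : ℝ := ∑ i ∈ S' ∩ A, min (Z i) b with hs'
    have h1 : s' ≤ ∑ i ∈ S', W i := by
      have heq : s' = ∑ i ∈ S' ∩ A, W i := by
        refine Finset.sum_congr rfl fun i hi => ?_
        have hiA : i ∈ A := Finset.mem_of_mem_inter_right hi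
        rw [hA, Finset.mem_filter] at hiA
        rw [min_eq_left hiA.2.2, hiA.2.1]
      rw [heq]
      exact Finset.sum_le_sum_of_subset_of_nonneg (Finset.inter_subset_left)
        (fun i _ _ => hW i)
    have h2 : M - s' ≤ 2 * K * b := by
      have hsd : ∑ i ∈ Finset.univ \ (S' ∩ A), min (Z i) b = M - s' := by
        have := Finset.sum_sdiff (f := fun i => min (Z i) b)
          (Finset.subset_univ (S' ∩ A))
        rw [← hM] at this
        linarith [this]
      have hsub : Finset.univ \ (S' ∩ A) ⊆ (Finset.univ \ S') ∪ (Finset.univ \ A) := by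
        intro i hi
        simp only [Finset.mem_sdiff, Finset.mem_union, Finset.mem_inter,
          Finset.mem_univ, true_and] at *
        tauto
      have hc1 : (Finset.univ \ S').card = k := by
        rw [Finset.card_sdiff_of_subset (Finset.subset_univ _), Finset.card_univ,
          Fintype.card_fin, hS']
        omega
      have hcard2 : (Finset.univ \ (S' ∩ A)).card ≤ 2 * k := by
        calc (Finset.univ \ (S' ∩ A)).card ≤ ((Finset.univ \ S') ∪ (Finset.univ \ A)).card :=
              Finset.card_le_card hsub
          _ ≤ (Finset.univ \ S').card + (Finset.univ \ A).card := Finset.card_union_le _ _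
          _ ≤ 2 * k := by omega
      have hbnd : ∑ i ∈ Finset.univ \ (S' ∩ A), min (Z i) b ≤
          ((Finset.univ \ (S' ∩ A)).card : ℝ) * b := by
        have := Finset.sum_le_card_nsmul (Finset.univ \ (S' ∩ A))
          (fun i => min (Z i) b) b (fun i _ => min_le_right _ _)
        rwa [nsmul_eq_mul] at this
      have hcc : ((Finset.univ \ (S' ∩ A)).card : ℝ) ≤ 2 * K := by
        rw [hK]
        exact_mod_cast hcard2
      have := hbnd.trans (mul_le_mul_of_nonneg_right hcc hb.le)
      rw [hsd] at this
      linarith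
    have hW0 : (0:ℝ) ≤ ∑ i ∈ S', W i := Finset.sum_nonneg fun i _ => hW i
    rw [hNK, ← sub_div]
    rcases le_or_gt M (2 * b * K) with hc | hc
    · have : (M - 2 * b * K) / N ≤ 0 := div_nonpos_of_nonpos_of_nonneg (by linarith) hN0.le
      exact this.trans (div_nonneg hW0 hNK0.le)
    · have hstep1 : (M - 2 * b * K) / N ≤ (M - 2 * b * K) / (N - K) :=
        div_le_div_of_nonneg_left (by linarith) hNK0 (by linarith)
      have hstep2 : (M - 2 * b * K) / (N - K) ≤ (∑ i ∈ S', W i) / (N - K) := by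
        have hrk : (2:ℝ) * b * K = 2 * K * b := by ring
        gcongr
        linarith
      exact hstep1.trans hstep2
  have hfin : 0 ≤ 2 * b * K / N := by positivity
  rw [abs_le]
  constructor <;> linarith

theorem trunc_aux {Ω : Type} [MeasureSpace Ω] [IsProbabilityMeasure (ℙ : Measure Ω)]
    {b : ℝ} (hb : 0 < b) (Z₀ : Ω → ℝ) (q : ℝ) (hq : 2 ≤ q) (hZ₀ : ∀ ω, 0 ≤ Z₀ ω)
    (hZm : Measurable Z₀) (hmom : Integrable fun ω => Z₀ ω ^ q) :
    |(∫ ω, Z₀ ω) - ∫ ω, min (Z₀ ω) b| ≤ (∫ ω, Z₀ ω ^ q) / b ^ (q - 1) := by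
  have hq1 : (1:ℝ) ≤ q := by linarith
  have hint1 : Integrable Z₀ := by
    refine Integrable.mono' ((integrable_const (1:ℝ)).add hmom) hZm.aestronglyMeasurable
      (Filter.Eventually.of_forall fun ω => ?_)
    rw [Real.norm_of_nonneg (hZ₀ ω)]
    simp only [Pi.add_apply]
    rcases le_or_gt (Z₀ ω) 1 with h | h
    · have : (0:ℝ) ≤ Z₀ ω ^ q := Real.rpow_nonneg (hZ₀ ω) q
      linarith
    · have h3 : Z₀ ω ≤ Z₀ ω ^ q := (Real.rpow_one (Z₀ ω)).symm.trans_le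
        (Real.rpow_le_rpow_of_exponent_le h.le hq1)
      exact h3.trans (by linarith [le_refl (Z₀ ω ^ q)])
  have hintmin : Integrable (fun ω => min (Z₀ ω) b) := by
    refine Integrable.mono' (integrable_const b) ((hZm.min measurable_const).aestronglyMeasurable)
      (Filter.Eventually.of_forall fun ω => ?_)
    rw [Real.norm_of_nonneg (le_min (hZ₀ ω) hb.le)]
    exact min_le_right _ _
  have hbq : (0:ℝ) < b ^ (q - 1) := Real.rpow_pos_of_pos hb _
  have key : ∀ ω, Z₀ ω - min (Z₀ ω) b ≤ Z₀ ω ^ q / b ^ (q - 1) := by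
    intro ω
    rcases le_or_gt (Z₀ ω) b with h | h
    · rw [min_eq_left h, sub_self]
      exact div_nonneg (Real.rpow_nonneg (hZ₀ ω) q) hbq.le
    · rw [min_eq_right h.le]
      have hx0 : 0 < Z₀ ω := hb.trans h
      have h1 : b ^ (q - 1) ≤ Z₀ ω ^ (q - 1) :=
        Real.rpow_le_rpow hb.le h.le (by linarith)
      have h2 : Z₀ ω * b ^ (q - 1) ≤ Z₀ ω ^ q := by
        calc Z₀ ω * b ^ (q - 1) ≤ Z₀ ω * Z₀ ω ^ (q - 1) :=
              mul_le_mul_of_nonneg_left h1 hx0.le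
          _ = Z₀ ω ^ q := by
              have h3 : Z₀ ω ^ ((1:ℝ) + (q-1)) = Z₀ ω ^ (1:ℝ) * Z₀ ω ^ (q-1) :=
                Real.rpow_add hx0 1 (q-1)
              rw [show (1:ℝ) + (q-1) = q by ring, Real.rpow_one] at h3
              rw [h3]
      exact (le_div_iff₀ hbq).2 (by nlinarith [mul_pos hb hbq])
  have hsub : (∫ ω, Z₀ ω) - ∫ ω, min (Z₀ ω) b = ∫ ω, (Z₀ ω - min (Z₀ ω) b) :=
    (integral_sub hint1 hintmin).symm
  have hnn : 0 ≤ ∫ ω, (Z₀ ω - min (Z₀ ω) b) :=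
    integral_nonneg fun ω => by simp [min_le_left]
  have hup : ∫ ω, (Z₀ ω - min (Z₀ ω) b) ≤ ∫ ω, Z₀ ω ^ q / b ^ (q - 1) :=
    integral_mono (hint1.sub hintmin) (hmom.div_const _) key
  rw [hsub, abs_of_nonneg hnn]
  calc ∫ ω, (Z₀ ω - min (Z₀ ω) b) ≤ ∫ ω, Z₀ ω ^ q / b ^ (q - 1) := hup
    _ = (∫ ω, Z₀ ω ^ q) / b ^ (q - 1) := integral_div _ _

/-- Deterministic trimming-vs-truncation claim (Claim 3.4), together with the
truncation bias bound for a nonnegative random variable. -/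
theorem trim_vs_truncate
    {n k t : ℕ} {η b : ℝ} (hb : 0 < b) (hη0 : 0 ≤ η) (hη1 : η < 1)
    (hkn : k < n) (ht : ⌊η * n⌋₊ + t ≤ k)
    (Z W : Fin n → ℝ) (hZ : ∀ i, 0 ≤ Z i) (hW : ∀ i, 0 ≤ W i)
    (hcontam : nCount (fun i => Z i ≠ W i) ≤ ⌊η * n⌋₊)
    (hcount : nCount (fun i => b < Z i) ≤ t)
    {Ω : Type} [MeasureSpace Ω] [IsProbabilityMeasure (ℙ : Measure Ω)]
    (Z₀ : Ω → ℝ) (q : ℝ) (hq : 2 ≤ q) (hZ₀ : ∀ ω, 0 ≤ Z₀ ω)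
    (hZm : Measurable Z₀) (hmom : Integrable fun ω => Z₀ ω ^ q) :
    |trimmedMean k W - (∑ i, min (Z i) b) / n| ≤ 2 * b * k / n ∧
    |(∫ ω, Z₀ ω) - ∫ ω, min (Z₀ ω) b| ≤ (∫ ω, Z₀ ω ^ q) / b ^ (q - 1) := by
  constructor
  · apply trim_aux hb hkn Z W hZ hW
    classical
    have hsub : (Finset.univ.filter (fun i => ¬(Z i = W i ∧ Z i ≤ b))) ⊆
        (Finset.univ.filter (fun i => Z i ≠ W i)) ∪ (Finset.univ.filter (fun i => b < Z i)) := by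
      intro i hi
      simp only [Finset.mem_filter, Finset.mem_union, Finset.mem_univ, true_and,
        not_and_or, not_le] at *
      tauto
    have hc := (Finset.card_le_card hsub).trans (Finset.card_union_le _ _)
    have h1 : (Finset.univ.filter (fun i => Z i ≠ W i)).card ≤ ⌊η * n⌋₊ := by
      unfold nCount at hcontam
      convert hcontam using 2
      exact (Finset.filter_congr_decidable _ _ _).symm
    have h2 : (Finset.univ.filter (fun i => b < Z i)).card ≤ t := by
      unfold nCount at hcount
      convert hcount using 2
    omega
  · exact trunc_aux hb Z₀ q hq hZ₀ hZm hmom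

end CovPaper
end

section
/- For any integer t>0, setting b_q(t) := e^{2/q}·(n·E[Z_1^q]/t)^{1/q}, the event {#{i∈[n] : Z_i > b_q(t)} ≤ t} holds with probability at least 1 − e^{−t−2}. -/
open MeasureTheory ProbabilityTheory Real
open scoped RealInnerProductSpace ENNReal NNReal

namespace CovPaper

variable {d n : ℕ}

variable {Ω : Type} [MeasureSpace Ω]

/-- Counting claim for a single sequence of i.i.d. nonnegative random variables
(Claim 3.5). -/
theorem counting_single
    {Ω : Type} [MeasureSpace Ω] [IsProbabilityMeasure (ℙ : Measure Ω)]
    {n : ℕ} (Z : Fin n → Ω → ℝ) (Z₀ : Ω → ℝ) (q : ℝ) (t : ℕ)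
    (hmeas : Measurable Z₀)
    (hiid : iIndepFun Z ℙ)
    (hident : ∀ i, IdentDistrib (Z i) Z₀ ℙ ℙ)
    (hnonneg : ∀ ω, 0 ≤ Z₀ ω) (hZn : ∀ i ω, 0 ≤ Z i ω)
    (hq : 2 ≤ q) (hmom : Integrable fun ω => Z₀ ω ^ q) (ht : 0 < t) :
    ℙ {ω | nCount (fun i =>
        Real.exp (2 / q) * ((n * ∫ ω', Z₀ ω' ^ q) / t) ^ (1 / q) < Z i ω) ≤ t} ≥
      1 - ENNReal.ofReal (Real.exp (-(t : ℝ) - 2)) := by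
  classical
  set E : ℝ := ∫ ω', Z₀ ω' ^ q with hE
  set b : ℝ := Real.exp (2 / q) * ((n * E) / t) ^ (1 / q) with hb
  have hq0 : (0 : ℝ) < q := lt_of_lt_of_le two_pos hq
  have hE0 : 0 ≤ E := integral_nonneg fun ω => Real.rpow_nonneg (hnonneg ω) q
  have hbase : (0 : ℝ) ≤ (n * E) / t := by positivity
  have hb0 : (0 : ℝ) ≤ b := mul_nonneg (Real.exp_pos _).le (Real.rpow_nonneg hbase _)
  set p : ℝ := (ℙ {ω | b < Z₀ ω}).toReal with hp
  have hp0 : 0 ≤ p := ENNReal.toReal_nonneg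
  -- key Markov bound : n * p ≤ t * exp (-2)
  have hnp : (n : ℝ) * p ≤ t * Real.exp (-2) := by
    rcases Nat.eq_zero_or_pos n with hn | hn
    · simp [hn]; positivity
    rcases eq_or_lt_of_le hE0 with hEz | hEpos
    · -- E = 0 : Z₀ = 0 a.e., so p = 0
      have hz : (fun ω => Z₀ ω ^ q) =ᵐ[ℙ] 0 := by
        rw [← integral_eq_zero_iff_of_nonneg (fun ω => Real.rpow_nonneg (hnonneg ω) q) hmom]
        exact hEz.symm
      have hnull : ℙ {ω | b < Z₀ ω} = 0 := by
        refine measure_mono_null (fun ω hω => ?_) (ae_iff.mp hz)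
        simp only [Set.mem_setOf_eq] at hω ⊢
        intro h0
        have hZ0 : Z₀ ω = 0 := by
          have h0' : Z₀ ω ^ q = 0 := by simpa using h0
          exact ((Real.rpow_eq_zero_iff_of_nonneg (hnonneg ω)).mp h0').1
        exact absurd (hZ0 ▸ hω) (not_lt.mpr hb0)
      have : p = 0 := by rw [hp, hnull]; simp
      rw [this, mul_zero]; positivity
    · -- main case : Markov's inequality
      have hbq : b ^ q = Real.exp 2 * ((n : ℝ) * E / t) := by
        rw [hb, Real.mul_rpow (Real.exp_pos _).le (Real.rpow_nonneg hbase _),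
          ← Real.exp_mul, div_mul_cancel₀ _ hq0.ne', ← Real.rpow_mul hbase,
          one_div, inv_mul_cancel₀ hq0.ne', Real.rpow_one]
      have hmark := mul_meas_ge_le_integral_of_nonneg
        (μ := (ℙ : Measure Ω)) (f := fun ω => Z₀ ω ^ q)
        (ae_of_all _ fun ω => Real.rpow_nonneg (hnonneg ω) q) hmom (b ^ q)
      have hsub : {ω | b < Z₀ ω} ⊆ {ω | b ^ q ≤ Z₀ ω ^ q} := by
        intro ω hω
        exact Real.rpow_le_rpow hb0 (le_of_lt hω) hq0.le
      have hple : p ≤ (ℙ {ω | b ^ q ≤ Z₀ ω ^ q}).toReal :=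
        ENNReal.toReal_mono (measure_ne_top _ _) (measure_mono hsub)
      have hbqpos : 0 < b ^ q := by
        rw [hbq]; positivity
      have h1 : b ^ q * p ≤ E :=
        le_trans (by rw [measureReal_def]; nlinarith) hmark
      rw [hbq] at h1
      have htpos : (0 : ℝ) < t := by exact_mod_cast ht
      have he2 : (0 : ℝ) < Real.exp 2 := Real.exp_pos 2
      rw [Real.exp_neg]
      have key : Real.exp 2 * ((n : ℝ) * E) * p ≤ E * t := by
        have := mul_le_mul_of_nonneg_right h1 htpos.le
        calc Real.exp 2 * ((n : ℝ) * E) * p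
            = Real.exp 2 * ((n : ℝ) * E / t) * p * t := by field_simp
          _ ≤ E * t := this
      have h2 : Real.exp 2 * ((n : ℝ) * p) ≤ t := by
        have hEne : E ≠ 0 := hEpos.ne'
        nlinarith
      calc (n : ℝ) * p = Real.exp 2 * ((n : ℝ) * p) * (Real.exp 2)⁻¹ := by
            field_simp
        _ ≤ t * (Real.exp 2)⁻¹ := by
            apply mul_le_mul_of_nonneg_right h2 (by positivity)
  -- events
  set A : Fin n → Set Ω := fun i => {ω | b < Z i ω} with hA
  have hAeq : ∀ i, A i = Z i ⁻¹' Set.Ioi b := fun i => rfl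
  have hAi : ∀ i, ℙ (A i) = ENNReal.ofReal p := by
    intro i
    have h := (hident i).measure_mem_eq (measurableSet_Ioi (a := b))
    rw [hAeq i, h, hp, ENNReal.ofReal_toReal (measure_ne_top _ _)]
    rfl
  have hprod : ∀ S : Finset (Fin n), ℙ (⋂ i ∈ S, A i) = ENNReal.ofReal p ^ S.card := by
    intro S
    have h := hiid.measure_inter_preimage_eq_mul S
      (sets := fun _ => Set.Ioi b) (fun i _ => measurableSet_Ioi)
    simp only [← hAeq] at h
    rw [h, Finset.prod_congr rfl (fun i _ => hAi i), Finset.prod_const]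
  -- union bound containment
  have hcontain : {ω | t < nCount (fun i => b < Z i ω)} ⊆
      ⋃ S ∈ Finset.univ.powersetCard (t + 1), ⋂ i ∈ S, A i := by
    intro ω hω
    simp only [Set.mem_setOf_eq, nCount] at hω
    obtain ⟨S, hSsub, hScard⟩ := Finset.exists_subset_card_eq
      (le_trans (by omega : t + 1 ≤ t + 1) hω)
    refine Set.mem_biUnion (Finset.mem_powersetCard_univ.mpr hScard) ?_
    refine Set.mem_iInter₂.mpr fun i hi => ?_
    have := hSsub hi
    simp only [Finset.mem_filter] at this
    exact this.2
  -- real-valued numeric bound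
  have hreal : (n.choose (t + 1) : ℝ) * p ^ (t + 1) ≤ Real.exp (-(t : ℝ) - 2) := by
    have hchoose : (n.choose (t + 1) : ℝ) * ((t + 1).factorial : ℝ) ≤ (n : ℝ) ^ (t + 1) := by
      have := Nat.descFactorial_le_pow n (t + 1)
      rw [Nat.descFactorial_eq_factorial_mul_choose] at this
      exact_mod_cast (by rw [mul_comm] at this; exact this : n.choose (t+1) * (t+1).factorial ≤ n ^ (t+1))
    have hfacpos : (0 : ℝ) < ((t + 1).factorial : ℝ) := by exact_mod_cast Nat.factorial_pos (t + 1)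
    have step1 : (n.choose (t + 1) : ℝ) * p ^ (t + 1) ≤ ((n : ℝ) * p) ^ (t + 1) / ((t + 1).factorial : ℝ) := by
      rw [le_div_iff₀ hfacpos, mul_pow]
      calc (n.choose (t + 1) : ℝ) * p ^ (t + 1) * ((t + 1).factorial : ℝ)
          = ((n.choose (t + 1) : ℝ) * ((t + 1).factorial : ℝ)) * p ^ (t + 1) := by ring
        _ ≤ (n : ℝ) ^ (t + 1) * p ^ (t + 1) := by
            apply mul_le_mul_of_nonneg_right hchoose (by positivity)
    have step2 : ((n : ℝ) * p) ^ (t + 1) / ((t + 1).factorial : ℝ) ≤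
        ((t : ℝ) * Real.exp (-2)) ^ (t + 1) / ((t + 1).factorial : ℝ) := by
      gcongr
    have step3 : ((t : ℝ) * Real.exp (-2)) ^ (t + 1) / ((t + 1).factorial : ℝ) ≤ Real.exp (-(t : ℝ) - 2) := by
      rw [mul_pow]
      have hterm : (t : ℝ) ^ (t + 1) / ((t + 1).factorial : ℝ) ≤ Real.exp (t : ℝ) :=
        Real.pow_div_factorial_le_exp (x := (t : ℝ)) (Nat.cast_nonneg t) (t + 1)
      calc (t : ℝ) ^ (t + 1) * Real.exp (-2) ^ (t + 1) / ((t + 1).factorial : ℝ)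
          = Real.exp (-2) ^ (t + 1) * ((t : ℝ) ^ (t + 1) / ((t + 1).factorial : ℝ)) := by ring
        _ ≤ Real.exp (-2) ^ (t + 1) * Real.exp (t : ℝ) := by
            apply mul_le_mul_of_nonneg_left hterm (by positivity)
        _ = Real.exp (-(t : ℝ) - 2) := by
            rw [← Real.exp_nat_mul, ← Real.exp_add]
            congr 1
            push_cast
            ring
    exact le_trans step1 (le_trans step2 step3)
  -- ENNReal union bound
  have hbad : ℙ {ω | t < nCount (fun i => b < Z i ω)} ≤
      ENNReal.ofReal (Real.exp (-(t : ℝ) - 2)) := by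
    refine le_trans (measure_mono hcontain) ?_
    refine le_trans (measure_biUnion_finset_le _ _) ?_
    have heach : ∀ S ∈ Finset.univ.powersetCard (t + 1),
        ℙ (⋂ i ∈ S, A i) = ENNReal.ofReal p ^ (t + 1) := by
      intro S hS
      rw [hprod S, Finset.mem_powersetCard_univ.mp hS]
    rw [Finset.sum_congr rfl heach, Finset.sum_const, Finset.card_powersetCard,
      Finset.card_univ, Fintype.card_fin, nsmul_eq_mul,
      ← ENNReal.ofReal_pow hp0, ← ENNReal.ofReal_natCast,
      ← ENNReal.ofReal_mul (by positivity)]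
    exact ENNReal.ofReal_le_ofReal hreal
  -- conclude
  rw [ge_iff_le, tsub_le_iff_right]
  have hcover : {ω | nCount (fun i => b < Z i ω) ≤ t} ∪
      {ω | t < nCount (fun i => b < Z i ω)} = Set.univ := by
    ext ω; simp [le_or_gt]
  calc (1 : ℝ≥0∞) = ℙ (Set.univ : Set Ω) := (measure_univ).symm
    _ = ℙ ({ω | nCount (fun i => b < Z i ω) ≤ t} ∪
        {ω | t < nCount (fun i => b < Z i ω)}) := by rw [hcover]
    _ ≤ ℙ {ω | nCount (fun i => b < Z i ω) ≤ t} +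
        ℙ {ω | t < nCount (fun i => b < Z i ω)} := measure_union_le _ _
    _ ≤ ℙ {ω | nCount (fun i => b < Z i ω) ≤ t} +
        ENNReal.ofReal (Real.exp (-(t : ℝ) - 2)) := by gcongr

end CovPaper
end

section
/- Assume B>0, t∈ℕ and k ≥ ⌊ηn⌋ + t. Then, whenever the event Count(B,t) holds, sup_{v∈S^{d-1}} |ê_k(v) − ⟨v,Σv⟩| ≤ ε(B) + 2Bk/n + κ_p^p‖Σ‖^{p/2}/B^{p/2−1}. -/
open MeasureTheory ProbabilityTheory Real
open scoped RealInnerProductSpace ENNReal NNReal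

namespace CovPaper

variable {d n : ℕ}

variable {Ω : Type} [MeasureSpace Ω]

section AuxProp41
set_option linter.unusedSectionVars false
set_option maxHeartbeats 1000000
variable {d : ℕ} {Ω : Type} [MeasureSpace Ω] [IsProbabilityMeasure (ℙ : Measure Ω)]

lemma coord_abs_le_norm' {d : ℕ} (x : EuclideanSpace ℝ (Fin d)) (i : Fin d) : |x i| ≤ ‖x‖ := by
  have h : x i ^ 2 ≤ ∑ j, x j ^ 2 :=
    Finset.single_le_sum (f := fun j => x j ^ 2) (fun j _ => sq_nonneg _) (Finset.mem_univ i)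
  have hn : ‖x‖ = Real.sqrt (∑ j, x j ^ 2) := by
    rw [EuclideanSpace.norm_eq]; congr 1
    exact Finset.sum_congr rfl fun j _ => by rw [Real.norm_eq_abs, sq_abs]
  rw [hn, ← Real.sqrt_sq_eq_abs]
  exact Real.sqrt_le_sqrt h

lemma quadForm_eq_sum {A : Matrix (Fin d) (Fin d) ℝ} {v : EuclideanSpace ℝ (Fin d)} :
    quadForm A v = ∑ i, ∑ j, v i * (A i j * v j) := by
  have h : (Matrix.toEuclideanCLM (𝕜 := ℝ) A) v = Matrix.toEuclideanLin A v := by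
    rw [← Matrix.coe_toEuclideanCLM_eq_toEuclideanLin]; rfl
  simp [quadForm, PiLp.inner_apply, h, Matrix.toEuclideanLin_apply,
    Matrix.mulVec, dotProduct, RCLike.inner_apply, Finset.mul_sum]
  exact Finset.sum_congr rfl fun i _ => by
    rw [Finset.sum_mul]; exact Finset.sum_congr rfl fun j _ => by ring

lemma quadForm_le_opNorm {A : Matrix (Fin d) (Fin d) ℝ} {v : EuclideanSpace ℝ (Fin d)}
    (hv : ‖v‖ = 1) : quadForm A v ≤ opNorm A := by
  calc ⟪v, Matrix.toEuclideanCLM (𝕜 := ℝ) A v⟫ ≤ ‖v‖ * ‖Matrix.toEuclideanCLM (𝕜 := ℝ) A v‖ :=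
        real_inner_le_norm _ _
    _ ≤ ‖v‖ * (‖Matrix.toEuclideanCLM (𝕜 := ℝ) A‖ * ‖v‖) := by
        gcongr; exact (Matrix.toEuclideanCLM (𝕜 := ℝ) A).le_opNorm v
    _ = opNorm A := by rw [hv, opNorm]; ring

lemma quadForm_smul {A : Matrix (Fin d) (Fin d) ℝ} (c : ℝ) (v : EuclideanSpace ℝ (Fin d)) :
    quadForm A (c • v) = c ^ 2 * quadForm A v := by
  rw [quadForm, quadForm, ContinuousLinearMap.map_smul, real_inner_smul_left,
    real_inner_smul_right]
  ring

lemma quadForm_zero' {A : Matrix (Fin d) (Fin d) ℝ} :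
    quadForm A (0 : EuclideanSpace ℝ (Fin d)) = 0 := by
  rw [quadForm, inner_zero_left]

lemma quadForm_cont {A : Matrix (Fin d) (Fin d) ℝ} :
    Continuous fun v : EuclideanSpace ℝ (Fin d) => quadForm A v :=
  continuous_id.inner (Matrix.toEuclideanCLM (𝕜 := ℝ) A).continuous

lemma sqnorm_int {X₀ : Ω → EuclideanSpace ℝ (Fin d)} (hX₀ : Measurable X₀) {p : ℝ}
    (hp : 4 ≤ p) (hmom : Integrable fun ω => ‖X₀ ω‖ ^ p) :
    Integrable fun ω => ‖X₀ ω‖ ^ 2 := by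
  have hint : Integrable (fun ω => 1 + ‖X₀ ω‖ ^ p) := (integrable_const 1).add hmom
  refine hint.mono' ((hX₀.norm.pow measurable_const).aestronglyMeasurable)
    (Filter.Eventually.of_forall fun ω => ?_)
  have h0 : (0:ℝ) ≤ ‖X₀ ω‖ := norm_nonneg _
  have hpn : (0:ℝ) ≤ ‖X₀ ω‖ ^ p := Real.rpow_nonneg h0 p
  rw [Real.norm_eq_abs, abs_of_nonneg (by positivity)]
  rcases le_or_gt (‖X₀ ω‖) 1 with h | h
  · nlinarith
  · have h2 : ‖X₀ ω‖ ^ 2 ≤ ‖X₀ ω‖ ^ p := by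
      calc ‖X₀ ω‖ ^ 2 = ‖X₀ ω‖ ^ (2:ℝ) := by rw [← Real.rpow_natCast (‖X₀ ω‖) 2]; norm_num
      _ ≤ ‖X₀ ω‖ ^ p := Real.rpow_le_rpow_of_exponent_le h.le (by linarith)
    linarith

lemma innersq_int {X₀ : Ω → EuclideanSpace ℝ (Fin d)} (hX₀ : Measurable X₀) {p : ℝ}
    (hp : 4 ≤ p) (hmom : Integrable fun ω => ‖X₀ ω‖ ^ p) (v : EuclideanSpace ℝ (Fin d)) :
    Integrable fun ω => ⟪X₀ ω, v⟫ ^ 2 := by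
  refine ((sqnorm_int hX₀ hp hmom).const_mul (‖v‖ ^ 2)).mono'
    (((hX₀.inner measurable_const).pow measurable_const).aestronglyMeasurable)
    (Filter.Eventually.of_forall fun ω => ?_)
  rw [Real.norm_eq_abs, abs_of_nonneg (by positivity)]
  have h := abs_real_inner_le_norm (X₀ ω) v
  calc ⟪X₀ ω, v⟫ ^ 2 = |⟪X₀ ω, v⟫| ^ 2 := (sq_abs _).symm
    _ ≤ (‖X₀ ω‖ * ‖v‖) ^ 2 := by
        have := abs_nonneg (⟪X₀ ω, v⟫); nlinarith
    _ = ‖v‖ ^ 2 * ‖X₀ ω‖ ^ 2 := by ring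

lemma prod_int {X₀ : Ω → EuclideanSpace ℝ (Fin d)} (hX₀ : Measurable X₀) {p : ℝ}
    (hp : 4 ≤ p) (hmom : Integrable fun ω => ‖X₀ ω‖ ^ p) (i j : Fin d) :
    Integrable fun ω => X₀ ω i * X₀ ω j := by
  refine (sqnorm_int hX₀ hp hmom).mono'
    (((measurable_pi_apply i).comp ((WithLp.measurable_ofLp 2 _).comp hX₀)).mul
      ((measurable_pi_apply j).comp ((WithLp.measurable_ofLp 2 _).comp hX₀))).aestronglyMeasurable
    (Filter.Eventually.of_forall fun ω => ?_)
  rw [Real.norm_eq_abs, abs_mul]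
  have hi : |X₀ ω i| ≤ ‖X₀ ω‖ := coord_abs_le_norm' (X₀ ω) i
  have hj : |X₀ ω j| ≤ ‖X₀ ω‖ := coord_abs_le_norm' (X₀ ω) j
  nlinarith [abs_nonneg (X₀ ω i), abs_nonneg (X₀ ω j)]

lemma quadForm_eq_integral {X₀ : Ω → EuclideanSpace ℝ (Fin d)} {Sig : Matrix (Fin d) (Fin d) ℝ}
    (hX₀ : Measurable X₀) {p : ℝ} (hp : 4 ≤ p) (hmom : Integrable fun ω => ‖X₀ ω‖ ^ p)
    (hcov : IsCovMatrix X₀ Sig) (v : EuclideanSpace ℝ (Fin d)) :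
    quadForm Sig v = ∫ ω, ⟪X₀ ω, v⟫ ^ 2 := by
  have hpt : ∀ ω, ⟪X₀ ω, v⟫ ^ 2 = ∑ i, ∑ j, v i * v j * (X₀ ω i * X₀ ω j) := by
    intro ω
    rw [sq, PiLp.inner_apply]
    simp only [RCLike.inner_apply, starRingEnd_apply, star_trivial]
    rw [Finset.sum_mul_sum]
    exact Finset.sum_congr rfl fun i _ => Finset.sum_congr rfl fun j _ => by ring
  rw [integral_congr_ae (Filter.Eventually.of_forall hpt)]
  rw [integral_finset_sum _ fun i _ => integrable_finset_sum _ fun j _ =>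
    ((prod_int hX₀ hp hmom i j).const_mul _)]
  rw [quadForm_eq_sum]
  refine Finset.sum_congr rfl fun i _ => ?_
  rw [integral_finset_sum _ fun j _ => ((prod_int hX₀ hp hmom i j).const_mul _)]
  refine Finset.sum_congr rfl fun j _ => ?_
  rw [MeasureTheory.integral_const_mul, hcov i j]; ring

lemma min_int {X₀ : Ω → EuclideanSpace ℝ (Fin d)} (hX₀ : Measurable X₀)
    (v : EuclideanSpace ℝ (Fin d)) {B : ℝ} (hB : 0 < B) :
    Integrable fun ω => min (⟪X₀ ω, v⟫ ^ 2) B := by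
  refine (integrable_const B).mono'
    ((((hX₀.inner measurable_const).pow measurable_const).min
      measurable_const).aestronglyMeasurable)
    (Filter.Eventually.of_forall fun ω => ?_)
  rw [Real.norm_eq_abs, abs_of_nonneg (le_min (sq_nonneg _) hB.le)]
  exact min_le_right _ _

lemma rpow_int {X₀ : Ω → EuclideanSpace ℝ (Fin d)} (hX₀ : Measurable X₀) {p : ℝ}
    (hp : 4 ≤ p) (hmom : Integrable fun ω => ‖X₀ ω‖ ^ p) (v : EuclideanSpace ℝ (Fin d)) :
    Integrable fun ω => |⟪X₀ ω, v⟫| ^ p := by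
  refine (hmom.const_mul (‖v‖ ^ p)).mono'
    (((hX₀.inner measurable_const).abs.pow_const p).aestronglyMeasurable)
    (Filter.Eventually.of_forall fun ω => ?_)
  rw [Real.norm_eq_abs, abs_of_nonneg (Real.rpow_nonneg (abs_nonneg _) p)]
  calc |⟪X₀ ω, v⟫| ^ p ≤ (‖X₀ ω‖ * ‖v‖) ^ p :=
        Real.rpow_le_rpow (abs_nonneg _) (abs_real_inner_le_norm _ _) (by linarith)
    _ = ‖v‖ ^ p * ‖X₀ ω‖ ^ p := by
        rw [Real.mul_rpow (norm_nonneg _) (norm_nonneg _)]; ring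

lemma pt_trunc (x B p : ℝ) (hB : 0 < B) (hp : 4 ≤ p) :
    x ^ 2 - min (x ^ 2) B ≤ |x| ^ p / B ^ (p / 2 - 1) := by
  have hBp : (0:ℝ) < B ^ (p / 2 - 1) := Real.rpow_pos_of_pos hB _
  rcases le_or_gt (x ^ 2) B with h | h
  · rw [min_eq_left h]
    have : (0:ℝ) ≤ |x| ^ p / B ^ (p / 2 - 1) := by positivity
    linarith
  · rw [min_eq_right h.le]
    have hx2 : (0:ℝ) < x ^ 2 := lt_trans hB h
    have h1 : |x| ^ p = (x ^ 2) ^ (p / 2) := by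
      rw [← sq_abs, ← Real.rpow_natCast |x| 2, ← Real.rpow_mul (abs_nonneg x)]
      congr 1; ring
    have hxp : |x| ^ p = (x ^ 2) ^ (p / 2 - 1) * x ^ 2 := by
      rw [h1]
      conv_lhs => rw [show p / 2 = p / 2 - 1 + 1 by ring]
      rw [Real.rpow_add hx2, Real.rpow_one]
    have h2 : B ^ (p / 2 - 1) ≤ (x ^ 2) ^ (p / 2 - 1) :=
      Real.rpow_le_rpow hB.le h.le (by linarith)
    rw [le_div_iff₀ hBp, hxp]
    nlinarith

noncomputable def kerSub (X₀ : Ω → EuclideanSpace ℝ (Fin d)) :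
    Submodule ℝ (EuclideanSpace ℝ (Fin d)) where
  carrier := {v | (fun ω => ⟪X₀ ω, v⟫) =ᵐ[ℙ] 0}
  add_mem' := by
    intro a b ha hb
    show (fun ω => ⟪X₀ ω, a + b⟫) =ᵐ[ℙ] 0
    filter_upwards [ha, hb] with ω h1 h2
    simp only [Pi.zero_apply] at *
    rw [inner_add_right, h1, h2, add_zero]
  zero_mem' := by
    show (fun ω => ⟪X₀ ω, (0 : EuclideanSpace ℝ (Fin d))⟫) =ᵐ[ℙ] 0
    apply Filter.Eventually.of_forall; intro ω; simp
  smul_mem' := by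
    intro c a ha
    show (fun ω => ⟪X₀ ω, c • a⟫) =ᵐ[ℙ] 0
    filter_upwards [ha] with ω h1
    simp only [Pi.zero_apply] at *
    rw [real_inner_smul_right, h1, mul_zero]

lemma mem_kerSub {X₀ : Ω → EuclideanSpace ℝ (Fin d)} {v : EuclideanSpace ℝ (Fin d)} :
    v ∈ kerSub X₀ ↔ (fun ω => ⟪X₀ ω, v⟫) =ᵐ[ℙ] 0 := Iff.rfl

lemma kerSub_of_quadForm_zero {X₀ : Ω → EuclideanSpace ℝ (Fin d)}
    {Sig : Matrix (Fin d) (Fin d) ℝ}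
    (hqi : ∀ v, quadForm Sig v = ∫ ω, ⟪X₀ ω, v⟫ ^ 2)
    (hint : ∀ v, Integrable fun ω => ⟪X₀ ω, v⟫ ^ 2)
    {v : EuclideanSpace ℝ (Fin d)} (h : quadForm Sig v = 0) : v ∈ kerSub X₀ := by
  rw [hqi] at h
  have h2 := (integral_eq_zero_iff_of_nonneg (fun ω => sq_nonneg _) (hint v)).mp h
  rw [mem_kerSub]
  filter_upwards [h2] with ω h3
  simp only [Pi.zero_apply] at h3 ⊢
  exact pow_eq_zero_iff (two_ne_zero) |>.mp h3

lemma kappa_set_bddAbove {X₀ : Ω → EuclideanSpace ℝ (Fin d)}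
    {Sig : Matrix (Fin d) (Fin d) ℝ} {p : ℝ} (hp : 4 ≤ p)
    (hqi : ∀ v, quadForm Sig v = ∫ ω, ⟪X₀ ω, v⟫ ^ 2)
    (hint : ∀ v, Integrable fun ω => ⟪X₀ ω, v⟫ ^ 2)
    (hrint : ∀ v : EuclideanSpace ℝ (Fin d), Integrable fun ω => |⟪X₀ ω, v⟫| ^ p)
    (hmom : Integrable fun ω => ‖X₀ ω‖ ^ p) :
    BddAbove {r : ℝ | ∃ v : EuclideanSpace ℝ (Fin d), quadForm Sig v = 1 ∧
      r = (∫ ω, |⟪X₀ ω, v⟫| ^ p) ^ (1 / p)} := by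
  classical
  by_cases hne : ∃ v : EuclideanSpace ℝ (Fin d), quadForm Sig v = 1
  case neg =>
    have hempty : {r : ℝ | ∃ v : EuclideanSpace ℝ (Fin d), quadForm Sig v = 1 ∧
        r = (∫ ω, |⟪X₀ ω, v⟫| ^ p) ^ (1 / p)} = ∅ := by
      ext r; simp only [Set.mem_setOf_eq, Set.mem_empty_iff_false, iff_false]
      rintro ⟨v, hv, -⟩; exact hne ⟨v, hv⟩
    rw [hempty]; exact bddAbove_empty
  obtain ⟨v₀, hv₀⟩ := hne
  set K := kerSub X₀ with hK
  set P : EuclideanSpace ℝ (Fin d) → EuclideanSpace ℝ (Fin d) :=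
    fun v => (Submodule.orthogonalProjection Kᗮ v : EuclideanSpace ℝ (Fin d)) with hP
  have hPmem : ∀ v, P v ∈ Kᗮ := fun v => SetLike.coe_mem _
  have hae : ∀ v : EuclideanSpace ℝ (Fin d),
      (fun ω => ⟪X₀ ω, v⟫) =ᵐ[ℙ] (fun ω => ⟪X₀ ω, P v⟫) := by
    intro v
    have hm : v - P v ∈ K := by
      have h1 := Submodule.sub_starProjection_mem_orthogonal (K := Kᗮ) v
      rwa [Submodule.orthogonal_orthogonal] at h1
    rw [hK, mem_kerSub] at hm
    filter_upwards [hm] with ω h1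
    simp only [Pi.zero_apply, inner_sub_right] at h1 ⊢
    linarith
  have hq_proj : ∀ v, quadForm Sig (P v) = quadForm Sig v := by
    intro v; rw [hqi, hqi]
    refine (integral_congr_ae ?_).symm
    filter_upwards [hae v] with ω h1; rw [h1]
  have hqnn : ∀ v, 0 ≤ quadForm Sig v := fun v => by
    rw [hqi]; exact integral_nonneg fun ω => sq_nonneg _
  set Sph : Set (EuclideanSpace ℝ (Fin d)) := Metric.sphere 0 1 ∩ (Kᗮ : Set _) with hSph
  have hcpt : IsCompact Sph :=
    (isCompact_sphere 0 1).inter_right Kᗮ.closed_of_finiteDimensional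
  have hw₀ : quadForm Sig (P v₀) = 1 := by rw [hq_proj, hv₀]
  have hw₀0 : P v₀ ≠ 0 := by
    intro h; rw [h, quadForm_zero'] at hw₀; norm_num at hw₀
  have hSphNe : Sph.Nonempty := by
    refine ⟨‖P v₀‖⁻¹ • P v₀, ?_, Submodule.smul_mem _ _ (hPmem v₀)⟩
    rw [mem_sphere_zero_iff_norm, norm_smul, norm_inv, norm_norm,
      inv_mul_cancel₀ (norm_ne_zero_iff.mpr hw₀0)]
  obtain ⟨u₀, hu₀S, hminOn⟩ := hcpt.exists_isMinOn hSphNe quadForm_cont.continuousOn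
  have hmin : ∀ u ∈ Sph, quadForm Sig u₀ ≤ quadForm Sig u := fun u hu => hminOn hu
  set c := quadForm Sig u₀ with hc
  have hu₀n : ‖u₀‖ = 1 := mem_sphere_zero_iff_norm.mp hu₀S.1
  have hcpos : 0 < c := by
    rcases (hqnn u₀).lt_or_eq with h | h
    · exact h
    · exfalso
      have hK0 : u₀ ∈ K := kerSub_of_quadForm_zero hqi hint h.symm
      have h0 : ⟪u₀, u₀⟫ = 0 :=
        Submodule.inner_right_of_mem_orthogonal hK0 hu₀S.2
      have : u₀ = 0 := inner_self_eq_zero.mp h0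
      rw [this, norm_zero] at hu₀n; norm_num at hu₀n
  have hwbound : ∀ v, quadForm Sig v = 1 → ‖P v‖ ^ 2 ≤ 1 / c := by
    intro v hv1
    have hqw : quadForm Sig (P v) = 1 := by rw [hq_proj, hv1]
    have hw0 : P v ≠ 0 := by
      intro h; rw [h, quadForm_zero'] at hqw; norm_num at hqw
    have hnw : (0:ℝ) < ‖P v‖ := norm_pos_iff.mpr hw0
    have huS : ‖P v‖⁻¹ • P v ∈ Sph :=
      ⟨mem_sphere_zero_iff_norm.mpr (by
        rw [norm_smul, norm_inv, norm_norm, inv_mul_cancel₀ hnw.ne']),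
        Submodule.smul_mem _ _ (hPmem v)⟩
    have h1 := hmin _ huS
    rw [quadForm_smul, hqw, mul_one] at h1
    rw [le_div_iff₀ hcpos]
    have h2 := mul_le_mul_of_nonneg_right h1 (sq_nonneg (‖P v‖))
    rw [inv_pow, inv_mul_cancel₀ (pow_ne_zero 2 hnw.ne')] at h2
    linarith [h2]
  set I := ∫ ω, ‖X₀ ω‖ ^ p with hI
  have hInn : 0 ≤ I := integral_nonneg fun ω => Real.rpow_nonneg (norm_nonneg _) p
  set M := Real.sqrt (1 / c) with hM
  have hMnn : 0 ≤ M := Real.sqrt_nonneg _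
  refine ⟨(M ^ p * I) ^ (1 / p), ?_⟩
  rintro r ⟨v, hv1, rfl⟩
  have hwn : ‖P v‖ ≤ M := by
    rw [hM]
    have h3 := hwbound v hv1
    nlinarith [Real.sq_sqrt (le_of_lt (div_pos one_pos hcpos) : (0:ℝ) ≤ 1/c),
      Real.sqrt_nonneg (1/c), norm_nonneg (P v)]
  have hJ : ∫ ω, |⟪X₀ ω, v⟫| ^ p = ∫ ω, |⟪X₀ ω, P v⟫| ^ p :=
    integral_congr_ae (by filter_upwards [hae v] with ω h1; rw [h1])
  have hJnn : 0 ≤ ∫ ω, |⟪X₀ ω, v⟫| ^ p :=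
    integral_nonneg fun ω => Real.rpow_nonneg (abs_nonneg _) _
  have hJle : ∫ ω, |⟪X₀ ω, P v⟫| ^ p ≤ M ^ p * I := by
    calc ∫ ω, |⟪X₀ ω, P v⟫| ^ p ≤ ∫ ω, M ^ p * ‖X₀ ω‖ ^ p := by
          refine integral_mono (hrint (P v)) (hmom.const_mul _) fun ω => ?_
          calc |⟪X₀ ω, P v⟫| ^ p ≤ (‖X₀ ω‖ * M) ^ p :=
                Real.rpow_le_rpow (abs_nonneg _)
                  (le_trans (abs_real_inner_le_norm _ _)
                    (by nlinarith [norm_nonneg (X₀ ω)])) (by linarith)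
            _ = M ^ p * ‖X₀ ω‖ ^ p := by
                rw [Real.mul_rpow (norm_nonneg _) hMnn]; ring
      _ = M ^ p * I := by rw [integral_const_mul]
  rw [hJ]
  exact Real.rpow_le_rpow (hJ ▸ hJnn) hJle (by positivity)

lemma moment_le_kappa {X₀ : Ω → EuclideanSpace ℝ (Fin d)}
    {Sig : Matrix (Fin d) (Fin d) ℝ} {p : ℝ} (hp : 4 ≤ p)
    (hqi : ∀ v, quadForm Sig v = ∫ ω, ⟪X₀ ω, v⟫ ^ 2)
    (hint : ∀ v, Integrable fun ω => ⟪X₀ ω, v⟫ ^ 2)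
    (hrint : ∀ v : EuclideanSpace ℝ (Fin d), Integrable fun ω => |⟪X₀ ω, v⟫| ^ p)
    (hmom : Integrable fun ω => ‖X₀ ω‖ ^ p)
    {v : EuclideanSpace ℝ (Fin d)} (hv : ‖v‖ = 1) :
    ∫ ω, |⟪X₀ ω, v⟫| ^ p ≤ kappa X₀ Sig p ^ p * opNorm Sig ^ (p / 2) := by
  have hp0 : (0:ℝ) < p := by linarith
  have hbdd := kappa_set_bddAbove hp hqi hint hrint hmom
  have hknn : 0 ≤ kappa X₀ Sig p := by
    refine Real.sSup_nonneg ?_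
    rintro r ⟨u, hu, rfl⟩
    exact Real.rpow_nonneg
      (integral_nonneg fun ω => Real.rpow_nonneg (abs_nonneg _) _) _
  have hopnn : (0:ℝ) ≤ opNorm Sig ^ (p / 2) := Real.rpow_nonneg (norm_nonneg _) _
  have hqnn : 0 ≤ quadForm Sig v := by
    rw [hqi]; exact integral_nonneg fun ω => sq_nonneg _
  rcases hqnn.lt_or_eq with hσpos | hσ0
  swap
  · have hae0 : (fun ω => ⟪X₀ ω, v⟫) =ᵐ[ℙ] 0 := by
      have h0 := kerSub_of_quadForm_zero hqi hint hσ0.symm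
      rwa [mem_kerSub] at h0
    have hz : ∫ ω, |⟪X₀ ω, v⟫| ^ p = 0 := by
      rw [integral_congr_ae (g := fun _ => (0:ℝ)) ?_]
      · simp
      · filter_upwards [hae0] with ω h1
        simp only [Pi.zero_apply] at h1
        rw [h1]
        simp [Real.zero_rpow hp0.ne']
    rw [hz]
    exact mul_nonneg (Real.rpow_nonneg hknn _) hopnn
  · set σ := quadForm Sig v with hσ
    set s := Real.sqrt σ with hs
    have hspos : 0 < s := Real.sqrt_pos.mpr hσpos
    have hs2 : s ^ 2 = σ := Real.sq_sqrt hσpos.le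
    set u := s⁻¹ • v with hu
    have hqu : quadForm Sig u = 1 := by
      rw [hu, quadForm_smul, ← hσ, ← hs2]
      field_simp
    set J := ∫ ω, |⟪X₀ ω, u⟫| ^ p with hJ
    have hJval : J = (s⁻¹) ^ p * ∫ ω, |⟪X₀ ω, v⟫| ^ p := by
      rw [hJ, ← MeasureTheory.integral_const_mul]
      refine integral_congr_ae (Filter.Eventually.of_forall fun ω => ?_)
      show |⟪X₀ ω, u⟫| ^ p = s⁻¹ ^ p * |⟪X₀ ω, v⟫| ^ p
      rw [hu, real_inner_smul_right, abs_mul,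
        Real.mul_rpow (abs_nonneg _) (abs_nonneg _), abs_of_pos (inv_pos.mpr hspos)]
    have hJnn : 0 ≤ J := integral_nonneg fun ω => Real.rpow_nonneg (abs_nonneg _) _
    have hr : J ^ (1 / p) ≤ kappa X₀ Sig p := le_csSup hbdd ⟨u, hqu, rfl⟩
    have hJk : J ≤ kappa X₀ Sig p ^ p := by
      have h1 := Real.rpow_le_rpow (Real.rpow_nonneg hJnn _) hr hp0.le
      rwa [← Real.rpow_mul hJnn, one_div, inv_mul_cancel₀ hp0.ne', Real.rpow_one] at h1
    have hIv : ∫ ω, |⟪X₀ ω, v⟫| ^ p = s ^ p * J := by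
      rw [hJval, ← mul_assoc, ← Real.mul_rpow hspos.le (inv_nonneg.mpr hspos.le),
        mul_inv_cancel₀ hspos.ne', Real.one_rpow, one_mul]
    have hsp : s ^ p = σ ^ (p / 2) := by
      rw [hs, Real.sqrt_eq_rpow, ← Real.rpow_mul hσpos.le]
      congr 1; ring
    have hσop : σ ^ (p / 2) ≤ opNorm Sig ^ (p / 2) :=
      Real.rpow_le_rpow hσpos.le (quadForm_le_opNorm hv) (by positivity)
    calc ∫ ω, |⟪X₀ ω, v⟫| ^ p = s ^ p * J := hIv
      _ ≤ σ ^ (p / 2) * kappa X₀ Sig p ^ p := by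
          rw [hsp]
          exact mul_le_mul_of_nonneg_left hJk (Real.rpow_nonneg hσpos.le _)
      _ ≤ kappa X₀ Sig p ^ p * opNorm Sig ^ (p / 2) := by
          rw [mul_comm]
          exact mul_le_mul_of_nonneg_left hσop (Real.rpow_nonneg hknn _)

lemma tail_bound {X₀ : Ω → EuclideanSpace ℝ (Fin d)}
    {Sig : Matrix (Fin d) (Fin d) ℝ} {p : ℝ} (hX₀ : Measurable X₀) (hp : 4 ≤ p)
    (hmom : Integrable fun ω => ‖X₀ ω‖ ^ p) (hcov : IsCovMatrix X₀ Sig)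
    {B : ℝ} (hB : 0 < B) {v : EuclideanSpace ℝ (Fin d)} (hv : ‖v‖ = 1) :
    quadForm Sig v - ∫ ω, min (⟪X₀ ω, v⟫ ^ 2) B ≤
      kappa X₀ Sig p ^ p * opNorm Sig ^ (p / 2) / B ^ (p / 2 - 1) := by
  have hqi := quadForm_eq_integral hX₀ hp hmom hcov
  have hint := innersq_int hX₀ hp hmom
  have hrint := rpow_int hX₀ hp hmom
  have hBp : (0:ℝ) < B ^ (p / 2 - 1) := Real.rpow_pos_of_pos hB _
  have h1 : quadForm Sig v - ∫ ω, min (⟪X₀ ω, v⟫ ^ 2) B =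
      ∫ ω, (⟪X₀ ω, v⟫ ^ 2 - min (⟪X₀ ω, v⟫ ^ 2) B) := by
    rw [hqi v, integral_sub (hint v) (min_int hX₀ v hB)]
  rw [h1]
  calc ∫ ω, (⟪X₀ ω, v⟫ ^ 2 - min (⟪X₀ ω, v⟫ ^ 2) B)
      ≤ ∫ ω, |⟪X₀ ω, v⟫| ^ p / B ^ (p / 2 - 1) := by
        refine integral_mono ((hint v).sub (min_int hX₀ v hB)) ((hrint v).div_const _)
          fun ω => pt_trunc _ _ _ hB hp
    _ = (∫ ω, |⟪X₀ ω, v⟫| ^ p) / B ^ (p / 2 - 1) := integral_div _ _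
    _ ≤ kappa X₀ Sig p ^ p * opNorm Sig ^ (p / 2) / B ^ (p / 2 - 1) := by
        have hm := moment_le_kappa hp hqi hint hrint hmom hv
        exact (div_le_div_iff_of_pos_right hBp).mpr hm

lemma trimmed_close {n k : ℕ} (hkn : k < n) {B : ℝ} (hB : 0 < B) (W Z : Fin n → ℝ)
    (hW : ∀ i, 0 ≤ W i) (hZ0 : ∀ i, 0 ≤ Z i) (hZB : ∀ i, Z i ≤ B)
    (G : Finset (Fin n)) (hWZ : ∀ i ∈ G, W i = Z i) (hGcard : n - k ≤ G.card) :
    |trimmedMean k W - (∑ i, Z i) / n| ≤ 2 * B * (k : ℝ) / n := by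
  have hn0 : 0 < n := lt_of_le_of_lt (Nat.zero_le k) hkn
  have hn : (0:ℝ) < n := by exact_mod_cast hn0
  have hm0 : 0 < n - k := Nat.sub_pos_of_lt hkn
  have hmpos : (0:ℝ) < ((n - k : ℕ) : ℝ) := by exact_mod_cast hm0
  set m : ℝ := ((n - k : ℕ) : ℝ) with hm
  have hmn : m = (n:ℝ) - k := by rw [hm, Nat.cast_sub hkn.le]
  have hkL : (0:ℝ) ≤ k := Nat.cast_nonneg k
  set t := ∑ i, Z i with ht
  have htnn : 0 ≤ t := Finset.sum_nonneg fun i _ => hZ0 i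
  have htB : t ≤ n * B := by
    rw [ht]
    have h := Finset.sum_le_card_nsmul Finset.univ Z B fun i _ => hZB i
    rwa [Finset.card_univ, Fintype.card_fin, nsmul_eq_mul] at h
  haveI hne : Nonempty {S : Finset (Fin n) // S.card = n - k} := by
    obtain ⟨T, -, hT⟩ := Finset.exists_subset_card_eq
      (show n - k ≤ (Finset.univ : Finset (Fin n)).card by
        rw [Finset.card_univ, Fintype.card_fin]; exact Nat.sub_le n k)
    exact ⟨⟨T, hT⟩⟩
  have hTM : trimmedMean k W = ⨅ S : {S : Finset (Fin n) // S.card = n - k},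
      (∑ i ∈ S.1, W i) / ((n - k : ℕ) : ℝ) := rfl
  have hbdd : BddBelow (Set.range fun S : {S : Finset (Fin n) // S.card = n - k} =>
      (∑ i ∈ S.1, W i) / ((n - k : ℕ) : ℝ)) := by
    refine ⟨0, ?_⟩; rintro x ⟨S, rfl⟩
    exact div_nonneg (Finset.sum_nonneg fun i _ => hW i) hmpos.le
  obtain ⟨S₀, hS₀G, hS₀card⟩ := Finset.exists_subset_card_eq hGcard
  have hup1 : trimmedMean k W ≤ (∑ i ∈ S₀, W i) / m := by
    rw [hTM]; exact ciInf_le hbdd ⟨S₀, hS₀card⟩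
  have hWS₀ : ∑ i ∈ S₀, W i = ∑ i ∈ S₀, Z i :=
    Finset.sum_congr rfl fun i hi => hWZ i (hS₀G hi)
  have h1 : ∑ i ∈ S₀, Z i ≤ t :=
    Finset.sum_le_sum_of_subset_of_nonneg (Finset.subset_univ _) fun i _ _ => hZ0 i
  have h2 : ∑ i ∈ S₀, Z i ≤ m * B := by
    have h := Finset.sum_le_card_nsmul S₀ Z B fun i _ => hZB i
    rw [hS₀card, nsmul_eq_mul] at h
    exact h
  have hup : trimmedMean k W - t / n ≤ 2 * B * (k:ℝ) / n := by
    rcases le_or_gt t (m * B) with hc | hc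
    · have key : trimmedMean k W ≤ t / m := by
        refine le_trans hup1 ?_
        rw [hWS₀]; gcongr
      have key2 : t / m ≤ t / n + 2 * B * (k:ℝ) / n := by
        rw [← add_div, div_le_div_iff₀ hmpos hn]
        nlinarith [mul_le_mul_of_nonneg_right hc hkL]
      linarith
    · have key : trimmedMean k W ≤ B := by
        refine le_trans hup1 ?_
        rw [hWS₀, div_le_iff₀ hmpos]
        linarith
      have key2 : B ≤ t / n + 2 * B * (k:ℝ) / n := by
        rw [← add_div, le_div_iff₀ hn]
        nlinarith
      linarith
  have hlow : t / n - 2 * B * (k:ℝ) / n ≤ trimmedMean k W := by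
    rw [hTM]
    refine le_ciInf ?_
    rintro ⟨S, hS⟩
    have hGc : Gᶜ.card ≤ k := by
      have h3 : Gᶜ.card = n - G.card := by
        rw [Finset.card_compl, Fintype.card_fin]
      omega
    have hsub : S \ G ⊆ Gᶜ := fun x hx => by
      rw [Finset.mem_compl]; exact (Finset.mem_sdiff.mp hx).2
    have hcard1 : (S ∩ G).card + (S \ G).card = S.card :=
      Finset.card_inter_add_card_sdiff S G
    have hAc : ((S ∩ G)ᶜ).card ≤ 2 * k := by
      have h3 : (S \ G).card ≤ k := le_trans (Finset.card_le_card hsub) hGc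
      have h4 : ((S ∩ G)ᶜ).card = n - (S ∩ G).card := by
        rw [Finset.card_compl, Fintype.card_fin]
      omega
    have hWA : ∑ i ∈ (S ∩ G), W i ≤ ∑ i ∈ S, W i :=
      Finset.sum_le_sum_of_subset_of_nonneg Finset.inter_subset_left fun i _ _ => hW i
    have hWZA : ∑ i ∈ (S ∩ G), W i = ∑ i ∈ (S ∩ G), Z i :=
      Finset.sum_congr rfl fun i hi => hWZ i (Finset.mem_of_mem_inter_right hi)
    have hsplit : ∑ i ∈ (S ∩ G), Z i + ∑ i ∈ (S ∩ G)ᶜ, Z i = t :=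
      Finset.sum_add_sum_compl (S ∩ G) Z
    have hZAc : ∑ i ∈ (S ∩ G)ᶜ, Z i ≤ (((S ∩ G)ᶜ).card : ℝ) * B := by
      have h := Finset.sum_le_card_nsmul ((S ∩ G)ᶜ) Z B fun i _ => hZB i
      rwa [nsmul_eq_mul] at h
    have hZc2 : ∑ i ∈ (S ∩ G)ᶜ, Z i ≤ 2 * (k:ℝ) * B := by
      refine le_trans hZAc ?_
      have h5 : (((S ∩ G)ᶜ).card : ℝ) ≤ 2 * (k:ℝ) := by exact_mod_cast hAc
      nlinarith
    have hsum : t - 2 * B * (k:ℝ) ≤ ∑ i ∈ S, W i := by linarith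
    have hsnn : 0 ≤ ∑ i ∈ S, W i := Finset.sum_nonneg fun i _ => hW i
    rcases le_or_gt (t - 2 * B * (k:ℝ)) 0 with hc | hc
    · have h6 : 0 ≤ (∑ i ∈ S, W i) / m := div_nonneg hsnn hmpos.le
      have h7 : t / n - 2 * B * (k:ℝ) / n ≤ 0 := by
        rw [show t / (n:ℝ) - 2 * B * (k:ℝ) / n = (t - 2 * B * (k:ℝ)) / n by ring]
        exact div_nonpos_iff.mpr (Or.inr ⟨hc, hn.le⟩)
      linarith
    · have h5 : (t - 2 * B * (k:ℝ)) / n ≤ (t - 2 * B * (k:ℝ)) / m := by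
        apply div_le_div_of_nonneg_left hc.le hmpos
        rw [hmn]; linarith
      have h6 : (t - 2 * B * (k:ℝ)) / m ≤ (∑ i ∈ S, W i) / m := by gcongr
      calc t / n - 2 * B * (k:ℝ) / n = (t - 2 * B * (k:ℝ)) / n := by ring
        _ ≤ (∑ i ∈ S, W i) / m := le_trans h5 h6
  exact abs_le.mpr ⟨by linarith, by linarith⟩

lemma nCount_eq {n : ℕ} (P : Fin n → Prop) [DecidablePred P] :
    nCount P = (Finset.univ.filter P).card := by
  rw [nCount]
  congr 1
  apply Finset.filter_congr_decidable

end AuxProp41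

/-- Under the counting condition, the trimmed estimators are controlled by the truncated
empirical process (Proposition 4.1). -/
theorem estimator_vs_truncated_process
    {Ω : Type} [MeasureSpace Ω] [IsProbabilityMeasure (ℙ : Measure Ω)]
    {d n : ℕ} (X₀ : Ω → EuclideanSpace ℝ (Fin d))
    (X Y : Fin n → Ω → EuclideanSpace ℝ (Fin d))
    (Sig : Matrix (Fin d) (Fin d) ℝ) (p η : ℝ) (B : ℝ) (t k : ℕ)
    (hX₀ : Measurable X₀) (hiid : IsIIDSample X X₀) (hp : 4 ≤ p)
    (hmom : Integrable fun ω => ‖X₀ ω‖ ^ p)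
    (hmean : (∫ ω, X₀ ω) = 0)
    (hcov : IsCovMatrix X₀ Sig) (hSig : Sig ≠ 0)
    (hY : ∀ i, Measurable (Y i)) (hη0 : 0 ≤ η) (hη1 : η < 1)
    (hcontam : ∀ ω, ((nCount fun i => Y i ω ≠ X i ω) : ℝ) ≤ η * n)
    (hB : 0 < B) (hkt : ⌊η * n⌋₊ + t ≤ k) (hkn : k < n)
    (ω : Ω)
    (hcount : ∀ v : EuclideanSpace ℝ (Fin d), ‖v‖ = 1 →
      nCount (fun i => B < ⟪X i ω, v⟫ ^ 2) ≤ t) :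
    ∀ v : EuclideanSpace ℝ (Fin d), ‖v‖ = 1 →
      |eHat (fun i => Y i ω) k v - quadForm Sig v| ≤
        sSup {x : ℝ | ∃ v' : EuclideanSpace ℝ (Fin d), ‖v'‖ = 1 ∧
            x = |∑ i, (min (⟪X i ω, v'⟫ ^ 2) B -
              ∫ ω', min (⟪X₀ ω', v'⟫ ^ 2) B)| / n}
          + 2 * B * k / n
          + kappa X₀ Sig p ^ p * opNorm Sig ^ (p / 2) / B ^ (p / 2 - 1) := by
  classical
  intro v hv
  have hn0 : 0 < n := lt_of_le_of_lt (Nat.zero_le k) hkn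
  have hnR : (0:ℝ) < n := by exact_mod_cast hn0
  set W : Fin n → ℝ := fun i => ⟪Y i ω, v⟫ ^ 2 with hWdef
  set Z : Fin n → ℝ := fun i => min (⟪X i ω, v⟫ ^ 2) B with hZdef
  set G : Finset (Fin n) := Finset.univ.filter
    (fun i => Y i ω = X i ω ∧ ⟪X i ω, v⟫ ^ 2 ≤ B) with hGdef
  have hWnn : ∀ i, 0 ≤ W i := fun i => sq_nonneg _
  have hZ0 : ∀ i, 0 ≤ Z i := fun i => le_min (sq_nonneg _) hB.le
  have hZB : ∀ i, Z i ≤ B := fun i => min_le_right _ _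
  have hWZ : ∀ i ∈ G, W i = Z i := by
    intro i hi
    rw [hGdef, Finset.mem_filter] at hi
    show ⟪Y i ω, v⟫ ^ 2 = min (⟪X i ω, v⟫ ^ 2) B
    rw [hi.2.1, min_eq_left hi.2.2]
  have hc1 : (Finset.univ.filter (fun i => Y i ω ≠ X i ω)).card ≤ ⌊η * n⌋₊ := by
    have h2 := hcontam ω
    rw [nCount_eq] at h2
    exact Nat.le_floor h2
  have hc2 : (Finset.univ.filter (fun i => B < ⟪X i ω, v⟫ ^ 2)).card ≤ t := by
    have h2 := hcount v hv
    rwa [nCount_eq] at h2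
  have hGcompl : (Gᶜ).card ≤ ⌊η * n⌋₊ + t := by
    have hsubset : Gᶜ ⊆ Finset.univ.filter (fun i => Y i ω ≠ X i ω) ∪
        Finset.univ.filter (fun i => B < ⟪X i ω, v⟫ ^ 2) := by
      intro i hi
      rw [Finset.mem_compl, hGdef, Finset.mem_filter] at hi
      push_neg at hi
      rw [Finset.mem_union, Finset.mem_filter, Finset.mem_filter]
      by_cases h : Y i ω = X i ω
      · exact Or.inr ⟨Finset.mem_univ _, hi (Finset.mem_univ i) h⟩
      · exact Or.inl ⟨Finset.mem_univ _, h⟩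
    calc Gᶜ.card ≤ _ := Finset.card_le_card hsubset
      _ ≤ _ + _ := Finset.card_union_le _ _
      _ ≤ ⌊η * n⌋₊ + t := add_le_add hc1 hc2
  have hGcard : n - k ≤ G.card := by
    have h3 : Gᶜ.card = n - G.card := by rw [Finset.card_compl, Fintype.card_fin]
    have h4 : G.card ≤ n := le_trans (Finset.card_le_card (Finset.subset_univ G))
      (by rw [Finset.card_univ, Fintype.card_fin])
    omega
  have htrim : |trimmedMean k W - (∑ i, Z i) / n| ≤ 2 * B * (k:ℝ) / n :=
    trimmed_close hkn hB W Z hWnn hZ0 hZB G hWZ hGcard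
  -- empirical process term
  set μ := ∫ ω', min (⟪X₀ ω', v⟫ ^ 2) B with hμdef
  have hqi := quadForm_eq_integral hX₀ hp hmom hcov
  have hμbds : ∀ v' : EuclideanSpace ℝ (Fin d),
      0 ≤ (∫ ω', min (⟪X₀ ω', v'⟫ ^ 2) B) ∧ (∫ ω', min (⟪X₀ ω', v'⟫ ^ 2) B) ≤ B := by
    intro v'
    constructor
    · exact integral_nonneg fun ω' => le_min (sq_nonneg _) hB.le
    · calc (∫ ω', min (⟪X₀ ω', v'⟫ ^ 2) B) ≤ ∫ _ω', B :=
          integral_mono (min_int hX₀ v' hB) (integrable_const B) fun ω' => min_le_right _ _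
        _ = B := by simp
  set ES : Set ℝ := {x : ℝ | ∃ v' : EuclideanSpace ℝ (Fin d), ‖v'‖ = 1 ∧
      x = |∑ i, (min (⟪X i ω, v'⟫ ^ 2) B -
        ∫ ω', min (⟪X₀ ω', v'⟫ ^ 2) B)| / n} with hESdef
  have hbddES : BddAbove ES := by
    refine ⟨B, ?_⟩
    rintro x ⟨v', hv', rfl⟩
    have hterm : ∀ i : Fin n, |min (⟪X i ω, v'⟫ ^ 2) B -
        ∫ ω', min (⟪X₀ ω', v'⟫ ^ 2) B| ≤ B := by
      intro i
      have h1 := (hμbds v').1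
      have h2 := (hμbds v').2
      have h3 : 0 ≤ min (⟪X i ω, v'⟫ ^ 2) B := le_min (sq_nonneg _) hB.le
      have h4 : min (⟪X i ω, v'⟫ ^ 2) B ≤ B := min_le_right _ _
      rw [abs_le]; constructor <;> linarith
    have habs : |∑ i, (min (⟪X i ω, v'⟫ ^ 2) B - ∫ ω', min (⟪X₀ ω', v'⟫ ^ 2) B)| ≤ n * B := by
      calc |∑ i, (min (⟪X i ω, v'⟫ ^ 2) B - ∫ ω', min (⟪X₀ ω', v'⟫ ^ 2) B)|
          ≤ ∑ i, |min (⟪X i ω, v'⟫ ^ 2) B - ∫ ω', min (⟪X₀ ω', v'⟫ ^ 2) B| :=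
            Finset.abs_sum_le_sum_abs _ _
        _ ≤ ∑ _i : Fin n, B := Finset.sum_le_sum fun i _ => hterm i
        _ = n * B := by rw [Finset.sum_const, Finset.card_univ, Fintype.card_fin, nsmul_eq_mul]
    rw [div_le_iff₀ hnR]
    nlinarith
  have hmemES : |∑ i, (Z i - μ)| / n ∈ ES := ⟨v, hv, rfl⟩
  have hE : |(∑ i, Z i) / n - μ| ≤ sSup ES := by
    have heq : (∑ i, Z i) / n - μ = (∑ i, (Z i - μ)) / n := by
      rw [Finset.sum_sub_distrib, Finset.sum_const, Finset.card_univ, Fintype.card_fin,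
        nsmul_eq_mul]
      field_simp
    rw [heq, abs_div, abs_of_pos hnR]
    exact le_csSup hbddES hmemES
  -- tail term
  have htail : quadForm Sig v - μ ≤
      kappa X₀ Sig p ^ p * opNorm Sig ^ (p / 2) / B ^ (p / 2 - 1) :=
    tail_bound hX₀ hp hmom hcov hB hv
  have hμle : μ ≤ quadForm Sig v := by
    rw [hqi v]
    exact integral_mono (min_int hX₀ v hB) (innersq_int hX₀ hp hmom v)
      fun ω' => min_le_left _ _
  have hkk : 2 * B * (k:ℝ) / n ≤ 2 * B * (k:ℝ) / n := le_refl _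
  have heHat : eHat (fun i => Y i ω) k v = trimmedMean k W := rfl
  have hfin1 : |eHat (fun i => Y i ω) k v - quadForm Sig v| ≤
      |trimmedMean k W - (∑ i, Z i) / n| + |(∑ i, Z i) / n - μ| + |μ - quadForm Sig v| := by
    rw [heHat]
    calc |trimmedMean k W - quadForm Sig v|
        ≤ |trimmedMean k W - (∑ i, Z i) / n| + |(∑ i, Z i) / n - quadForm Sig v| :=
          abs_sub_le _ _ _
      _ ≤ |trimmedMean k W - (∑ i, Z i) / n| +
          (|(∑ i, Z i) / n - μ| + |μ - quadForm Sig v|) := by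
          have := abs_sub_le ((∑ i, Z i) / n) μ (quadForm Sig v)
          linarith
      _ = _ := by ring
  have hμabs : |μ - quadForm Sig v| ≤
      kappa X₀ Sig p ^ p * opNorm Sig ^ (p / 2) / B ^ (p / 2 - 1) := by
    rw [abs_sub_comm, abs_of_nonneg (by linarith)]
    exact htail
  linarith

end CovPaper
end
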